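/- Let X be a reflexive Banach space, f: X → ℝ Fréchet differentiable, ψ*: X* → ℝ Fréchet differentiable, L > 0, σ > 0, N ≥ 1, and let θ_{−2} = θ_{−1} = 0 and θ_0, θ_1, …, θ_N be positive reals. Define the AMD coefficients by a_{k+1,i} = 0 for 0 ≤ i < k and a_{k+1,k} = (σ/L)(θ_k² − θ_{k−1}²), for k = 0, …, N−1; and b_{0,0} = −1, b_{k+1,0} = 0 for k ≥ 1, b_{k+1,s} = (θ_{s−1}² − θ_{s−2}²)(1/θ_k² − 1/θ_{k+1}²) for 1 ≤ s ≤ k−1, b_{k+1,k} = (θ_k² − θ_{k−2}²)/θ_k² − (θ_{k−1}² − θ_{k−2}²)/θ_{k+1}², and b_{k+1,k+1} = −(θ_{k+1}² − θ_{k−1}²)/θ_{k+1}², for k = 0, …, N−1. Then the mirror dual of this CFOM coincides with dual-AMD: for any q_0 ∈ X, the mirror-dual sequences q_{k+1} = q_k − Σ_{i=0}^{k} a_{N−i,N−1−k} ∇ψ*(r_i), r_{k+1} = r_k − Σ_{i=0}^{k+1} b_{N−i,N−1−k} ∇f(q_i) with r_0 = −b_{N,N} ∇f(q_0) are identical to the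 sequences generated by: g_0 = (1/θ_N²) ∇f(q_0), r_0 = ((θ_N² − θ_{N−2}²)/θ_N²) ∇f(q_0), and for k = 0, …, N−1: q_{k+1} = q_k − (σ/L)(θ_{N−k−1}² − θ_{N−k−2}²) ∇ψ*(r_k); g_{k+1} = g_k + (1/θ_{N−k−1}²)(∇f(q_{k+1}) − ∇f(q_k)); r_{k+1} = r_k + (θ_{N−k−1}² − θ_{N−k−2}²)(g_{k+1} − g_k) + (θ_{N−k−2}² − θ_{N−k−3}²) g_{k+1} (with θ_j := 0 for j < 0). -/

import Mathlib

open NormedSpace Finset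

/-- The mirror dual of the AMD coupled first-order method
coincides with dual-AMD.  Here `X` is a reflexive Banach space, `f : X → ℝ`
and `ψ* : X* → ℝ` are Fréchet differentiable, `θ : ℤ → ℝ` satisfies
`θ j = 0` for `j < 0` and `θ j > 0` for `0 ≤ j ≤ N`, and the AMD coefficients
`a, b` are given explicitly in terms of `θ`.  The mirror-dual sequences
`(q, r)` of the CFOM with these coefficients coincide with the sequences
`(q', r')` generated by the dual-AMD recursion (with auxiliary sequence `g`). -/
theorem dual_AMD_is_mirror_dual_of_AMD
    (X : Type*) [NormedAddCommGroup X] [NormedSpace ℝ X] [CompleteSpace X]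
    (hrefl : Function.Surjective (inclusionInDoubleDual ℝ X))
    (f : X → ℝ) (gradf : X → StrongDual ℝ X)
    (hf : ∀ x : X, HasFDerivAt f (gradf x) x)
    (psiStar : StrongDual ℝ X → ℝ) (gradPsiStar : StrongDual ℝ X → X)
    (hpsiStar : ∀ u : StrongDual ℝ X,
      HasFDerivAt psiStar (inclusionInDoubleDual ℝ X (gradPsiStar u)) u)
    (L σ : ℝ) (hL : 0 < L) (hσ : 0 < σ)
    (N : ℕ) (hN : 1 ≤ N)
    (θ : ℤ → ℝ)
    (hθneg : ∀ j : ℤ, j < 0 → θ j = 0)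
    (hθpos : ∀ j : ℤ, 0 ≤ j → j ≤ N → 0 < θ j)
    -- the AMD coefficients
    (a b : ℕ → ℕ → ℝ)
    (ha0 : ∀ k < N, ∀ i < k, a (k + 1) i = 0)
    (hak : ∀ k < N, a (k + 1) k = σ / L * (θ k ^ 2 - θ ((k : ℤ) - 1) ^ 2))
    (hb00 : b 0 0 = -1)
    (hb0 : ∀ k, 1 ≤ k → k < N → b (k + 1) 0 = 0)
    (hbs : ∀ k < N, ∀ s, 1 ≤ s → s + 1 ≤ k →
      b (k + 1) s = (θ ((s : ℤ) - 1) ^ 2 - θ ((s : ℤ) - 2) ^ 2) *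
        (1 / θ k ^ 2 - 1 / θ (k + 1 : ℕ) ^ 2))
    (hbk : ∀ k < N, b (k + 1) k =
      (θ k ^ 2 - θ ((k : ℤ) - 2) ^ 2) / θ k ^ 2 -
        (θ ((k : ℤ) - 1) ^ 2 - θ ((k : ℤ) - 2) ^ 2) / θ (k + 1 : ℕ) ^ 2)
    (hbk1 : ∀ k < N, b (k + 1) (k + 1) =
      -(θ (k + 1 : ℕ) ^ 2 - θ ((k : ℤ) - 1) ^ 2) / θ (k + 1 : ℕ) ^ 2)
    -- the mirror-dual sequences of the CFOM with coefficients `a`, `b`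
    (q : ℕ → X) (r : ℕ → StrongDual ℝ X)
    (hr0 : r 0 = -(b N N) • gradf (q 0))
    (hq : ∀ k < N, q (k + 1) =
      q k - ∑ i ∈ range (k + 1), a (N - i) (N - 1 - k) • gradPsiStar (r i))
    (hr : ∀ k < N, r (k + 1) =
      r k - ∑ i ∈ range (k + 2), b (N - i) (N - 1 - k) • gradf (q i))
    -- the dual-AMD sequences
    (q' : ℕ → X) (g r' : ℕ → StrongDual ℝ X)
    (hq'0 : q' 0 = q 0)
    (hg0 : g 0 = (1 / θ (N : ℤ) ^ 2) • gradf (q' 0))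
    (hr'0 : r' 0 =
      ((θ (N : ℤ) ^ 2 - θ ((N : ℤ) - 2) ^ 2) / θ (N : ℤ) ^ 2) • gradf (q' 0))
    (hq' : ∀ k < N, q' (k + 1) = q' k -
      (σ / L * (θ ((N : ℤ) - k - 1) ^ 2 - θ ((N : ℤ) - k - 2) ^ 2)) •
        gradPsiStar (r' k))
    (hg : ∀ k < N, g (k + 1) = g k +
      (1 / θ ((N : ℤ) - k - 1) ^ 2) • (gradf (q' (k + 1)) - gradf (q' k)))
    (hr' : ∀ k < N, r' (k + 1) = r' k +
      (θ ((N : ℤ) - k - 1) ^ 2 - θ ((N : ℤ) - k - 2) ^ 2) • (g (k + 1) - g k) +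
        (θ ((N : ℤ) - k - 2) ^ 2 - θ ((N : ℤ) - k - 3) ^ 2) • g (k + 1)) :
    ∀ k ≤ N, q k = q' k ∧ r k = r' k := by
  have hθsq : ∀ j : ℤ, 0 ≤ j → j ≤ (N : ℤ) → θ j ^ 2 ≠ 0 := fun j h1 h2 =>
    pow_ne_zero _ (hθpos j h1 h2).ne'
  suffices H : ∀ k, k ≤ N → (∀ j ≤ k, q j = q' j) ∧ r k = r' k ∧
      g k = (1 / θ ((N : ℤ) - (k : ℤ)) ^ 2) • gradf (q' k) +
        ∑ i ∈ range k, (1 / θ ((N : ℤ) - (i : ℤ)) ^ 2 -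
          1 / θ ((N : ℤ) - (i : ℤ) - 1) ^ 2) • gradf (q' i) by
    exact fun k hk => ⟨(H k hk).1 k le_rfl, (H k hk).2.1⟩
  intro k
  induction k with
  | zero =>
    intro _
    have hq0 : q 0 = q' 0 := hq'0.symm
    refine ⟨fun j hj => by
        have : j = 0 := Nat.le_zero.mp hj
        rw [this]; exact hq0, ?_, ?_⟩
    · have hNN := hbk1 (N - 1) (by omega)
      rw [show N - 1 + 1 = N by omega] at hNN
      rw [show ((N - 1 : ℕ) : ℤ) - 1 = (N : ℤ) - 2 by omega] at hNN
      rw [hr0, hr'0, hNN, hq0, neg_div, neg_neg]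
    · simp only [Nat.cast_zero, sub_zero, range_zero, sum_empty, add_zero]
      exact hg0
  | succ k IH =>
    intro hk1
    have hkN : k < N := hk1
    obtain ⟨hqIH, hrIH, hgIH⟩ := IH (le_of_lt hkN)
    have hAne : θ ((N : ℤ) - (k : ℤ) - 1) ^ 2 ≠ 0 := hθsq _ (by omega) (by omega)
    have hDne : θ ((N : ℤ) - (k : ℤ)) ^ 2 ≠ 0 := hθsq _ (by omega) (by omega)
    -- the q step
    have hsum : ∑ i ∈ range (k + 1), a (N - i) (N - 1 - k) • gradPsiStar (r i)
        = a (N - k) (N - 1 - k) • gradPsiStar (r k) := by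
      refine Finset.sum_eq_single_of_mem k (self_mem_range_succ k) fun i hi hne => ?_
      have hik : i < k + 1 := mem_range.mp hi
      rw [show N - i = N - i - 1 + 1 by omega,
        ha0 (N - i - 1) (by omega) (N - 1 - k) (by omega), zero_smul]
    have hacoef : a (N - k) (N - 1 - k) =
        σ / L * (θ ((N : ℤ) - (k : ℤ) - 1) ^ 2 - θ ((N : ℤ) - (k : ℤ) - 2) ^ 2) := by
      rw [show N - k = N - 1 - k + 1 by omega, hak (N - 1 - k) (by omega),
        show ((N - 1 - k : ℕ) : ℤ) = (N : ℤ) - (k : ℤ) - 1 by omega,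
        show (N : ℤ) - (k : ℤ) - 1 - 1 = (N : ℤ) - (k : ℤ) - 2 by ring]
    have hq1 : q (k + 1) = q' (k + 1) := by
      rw [hq k hkN, hq' k hkN, hqIH k le_rfl, hsum, hrIH, hacoef]
    have hq1All : ∀ j ≤ k + 1, q j = q' j := by
      intro j hj
      rcases Nat.lt_or_ge j (k + 1) with h | h
      · exact hqIH j (by omega)
      · have : j = k + 1 := by omega
        rw [this]; exact hq1
    -- the g step
    have hg1 : g (k + 1) = (1 / θ ((N : ℤ) - (k : ℤ) - 1) ^ 2) • gradf (q' (k + 1)) +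
        ∑ i ∈ range (k + 1), (1 / θ ((N : ℤ) - (i : ℤ)) ^ 2 -
          1 / θ ((N : ℤ) - (i : ℤ) - 1) ^ 2) • gradf (q' i) := by
      rw [hg k hkN, hgIH, Finset.sum_range_succ]
      module
    -- the b coefficients
    have hbw : ∀ i < k, b (N - i) (N - 1 - k) =
        (-(θ ((N : ℤ) - (k : ℤ) - 2) ^ 2 - θ ((N : ℤ) - (k : ℤ) - 3) ^ 2)) *
          (1 / θ ((N : ℤ) - (i : ℤ)) ^ 2 - 1 / θ ((N : ℤ) - (i : ℤ) - 1) ^ 2) := by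
      intro i hik
      by_cases hs0 : k + 1 = N
      · have hB : θ ((N : ℤ) - (k : ℤ) - 2) = 0 := hθneg _ (by omega)
        have hC : θ ((N : ℤ) - (k : ℤ) - 3) = 0 := hθneg _ (by omega)
        have hb := hb0 (N - i - 1) (by omega) (by omega)
        rw [show N - i - 1 + 1 = N - i by omega] at hb
        rw [show N - 1 - k = 0 by omega, hb, hB, hC]
        ring
      · have hb := hbs (N - i - 1) (by omega) (N - 1 - k) (by omega) (by omega)
        rw [show N - i - 1 + 1 = N - i by omega] at hb
        rw [hb,
          show ((N - 1 - k : ℕ) : ℤ) - 1 = (N : ℤ) - (k : ℤ) - 2 by omega,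
          show ((N - 1 - k : ℕ) : ℤ) - 2 = (N : ℤ) - (k : ℤ) - 3 by omega,
          show ((N - i - 1 : ℕ) : ℤ) = (N : ℤ) - (i : ℤ) - 1 by omega,
          show ((N - i : ℕ) : ℤ) = (N : ℤ) - (i : ℤ) by omega]
        ring
    have hbK : b (N - k) (N - 1 - k) =
        (θ ((N : ℤ) - (k : ℤ) - 1) ^ 2 - θ ((N : ℤ) - (k : ℤ) - 3) ^ 2) /
            θ ((N : ℤ) - (k : ℤ) - 1) ^ 2 -
          (θ ((N : ℤ) - (k : ℤ) - 2) ^ 2 - θ ((N : ℤ) - (k : ℤ) - 3) ^ 2) /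
            θ ((N : ℤ) - (k : ℤ)) ^ 2 := by
      have hb := hbk (N - 1 - k) (by omega)
      rw [show N - 1 - k + 1 = N - k by omega] at hb
      rw [hb,
        show ((N - 1 - k : ℕ) : ℤ) = (N : ℤ) - (k : ℤ) - 1 by omega,
        show ((N - k : ℕ) : ℤ) = (N : ℤ) - (k : ℤ) by omega,
        show (N : ℤ) - (k : ℤ) - 1 - 1 = (N : ℤ) - (k : ℤ) - 2 by ring,
        show (N : ℤ) - (k : ℤ) - 1 - 2 = (N : ℤ) - (k : ℤ) - 3 by ring]
    have hbK1 : b (N - (k + 1)) (N - 1 - k) =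
        -((θ ((N : ℤ) - (k : ℤ) - 1) ^ 2 - θ ((N : ℤ) - (k : ℤ) - 3) ^ 2) /
            θ ((N : ℤ) - (k : ℤ) - 1) ^ 2) := by
      by_cases hs0 : k + 1 = N
      · have hC : θ ((N : ℤ) - (k : ℤ) - 3) = 0 := hθneg _ (by omega)
        rw [show N - (k + 1) = 0 by omega, show N - 1 - k = 0 by omega, hb00, hC]
        rw [zero_pow two_ne_zero, sub_zero, div_self hAne]
      · have hb := hbk1 (N - 1 - k - 1) (by omega)
        rw [show N - 1 - k - 1 + 1 = N - 1 - k by omega] at hb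
        rw [show N - (k + 1) = N - 1 - k by omega, hb,
          show ((N - 1 - k : ℕ) : ℤ) = (N : ℤ) - (k : ℤ) - 1 by omega,
          show ((N - 1 - k - 1 : ℕ) : ℤ) - 1 = (N : ℤ) - (k : ℤ) - 3 by omega]
        ring
    -- closed form for the CFOM sum
    have hS : ∑ i ∈ range (k + 2), b (N - i) (N - 1 - k) • gradf (q' i)
        = (-(θ ((N : ℤ) - (k : ℤ) - 2) ^ 2 - θ ((N : ℤ) - (k : ℤ) - 3) ^ 2)) •
            (∑ i ∈ range k, (1 / θ ((N : ℤ) - (i : ℤ)) ^ 2 -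
              1 / θ ((N : ℤ) - (i : ℤ) - 1) ^ 2) • gradf (q' i))
          + b (N - k) (N - 1 - k) • gradf (q' k)
          + b (N - (k + 1)) (N - 1 - k) • gradf (q' (k + 1)) := by
      rw [Finset.sum_range_succ, Finset.sum_range_succ]
      congr 1
      congr 1
      rw [Finset.smul_sum]
      refine Finset.sum_congr rfl fun i hi => ?_
      rw [hbw i (mem_range.mp hi), smul_smul]
    -- the r step
    have hr1 : r (k + 1) = r' (k + 1) := by
      have hqsum : ∑ i ∈ range (k + 2), b (N - i) (N - 1 - k) • gradf (q i)
          = ∑ i ∈ range (k + 2), b (N - i) (N - 1 - k) • gradf (q' i) :=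
        Finset.sum_congr rfl fun i hi => by
          rw [hq1All i (by have := mem_range.mp hi; omega)]
      rw [hr k hkN, hr' k hkN, hg k hkN, hrIH, hgIH, hqsum, hS, hbK, hbK1]
      match_scalars <;> ring
    refine ⟨hq1All, hr1, ?_⟩
    rw [show ((N : ℤ) - ((k + 1 : ℕ) : ℤ)) = (N : ℤ) - (k : ℤ) - 1 by push_cast; ring]
    exact hg1
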